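/- Let T : g^{n+1} → ℝ and T' : g^{m+1} → ℝ be invariant multilinear forms on g, let B be a nondegenerate invariant symmetric bilinear form on g, let (e_i) be a basis of g and (e^i) the basis of g dual to it with respect to B (i.e. B(e_i, e^j) = δ_i^j). Define the multilinear form S : k^n × k^m → ℝ by S(x_1,…,x_n; y_1,…,y_m) = ∑_i T(x_1,…,x_n, e_i)·T'(e^i, y_1,…,y_m) (contraction of the last index of T with the first index of T' over all of g). Then S is h-invariant: for every z ∈ h and all x_1,…,x_n, y_1,…,y_m ∈ k one has ∑_{s=1}^n S(x_1,…,⁅z,x_s⁆,…,x_n; y_1,…,y_m) + ∑_{t=1}^m S(x_1,…,x_n; y_1,…,⁅z,y_t⁆,…,y_m) = 0 (note that ⁅z,x_s⁆ and ⁅z,y_t⁆ lie in k by reductivity, so all arguments stay in k). -/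

import Mathlib

open Finset

/-- Let `g = h ⊕ k` be a reductive decomposition of a
finite-dimensional real Lie algebra `g` with respect to the Lie subalgebra `h`.
Let `T`, `T'` be invariant multilinear forms on `g` of `n+1` resp. `m+1`
arguments, `B` a nondegenerate invariant symmetric bilinear form on `g`,
`e` a basis of `g` and `e'` the `B`-dual basis of `g`.  Then the contraction
`S(x₁,…,xₙ; y₁,…,y_m) = ∑ i, T(x₁,…,xₙ,e i) * T'(e' i, y₁,…,y_m)`
is `h`-invariant on `k`-arguments. -/
theorem contraction_over_algebra_h_invariant
    {g : Type*} [LieRing g] [LieAlgebra ℝ g] [FiniteDimensional ℝ g]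
    (h : LieSubalgebra ℝ g) (k : Submodule ℝ g)
    (hcompl : IsCompl h.toSubmodule k)
    (hred : ∀ z ∈ h, ∀ x ∈ k, ⁅z, x⁆ ∈ k)
    (n m : ℕ)
    (T : MultilinearMap ℝ (fun _ : Fin (n+1) => g) ℝ)
    (T' : MultilinearMap ℝ (fun _ : Fin (m+1) => g) ℝ)
    (hT : ∀ (y : g) (v : Fin (n+1) → g),
      ∑ s, T (Function.update v s ⁅y, v s⁆) = 0)
    (hT' : ∀ (y : g) (v : Fin (m+1) → g),
      ∑ s, T' (Function.update v s ⁅y, v s⁆) = 0)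
    (B : g →ₗ[ℝ] g →ₗ[ℝ] ℝ)
    (hBsymm : ∀ x y, B x y = B y x)
    (hBinv : ∀ z x y : g, B ⁅z, x⁆ y + B x ⁅z, y⁆ = 0)
    (hBnd : ∀ x : g, (∀ y : g, B x y = 0) → x = 0)
    (ι : Type*) [Fintype ι] [DecidableEq ι]
    (e : Module.Basis ι ℝ g) (e' : ι → g)
    (hdual : ∀ i j, B (e i) (e' j) = if i = j then 1 else 0)
    (z : g) (hz : z ∈ h)
    (x : Fin n → g) (hx : ∀ i, x i ∈ k)
    (y : Fin m → g) (hy : ∀ i, y i ∈ k) :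
    (∑ s : Fin n, ∑ i : ι,
        T (Fin.snoc (Function.update x s ⁅z, x s⁆) (e i)) *
          T' (Fin.cons (e' i) y)) +
    (∑ t : Fin m, ∑ i : ι,
        T (Fin.snoc x (e i)) *
          T' (Fin.cons (e' i) (Function.update y t ⁅z, y t⁆))) = 0 := by
  classical
  -- Expansion of any vector in the `e'` "basis":  u = ∑ i, B (e i) u • e' i
  have expA : ∀ u : g, ∑ i : ι, B (e i) u • e' i = u := by
    intro u
    have hbase : ∀ j : ι, B (e j) (u - ∑ i : ι, B (e i) u • e' i) = 0 := by
      intro j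
      have hs : B (e j) (∑ i : ι, B (e i) u • e' i) = B (e j) u := by
        rw [map_sum]
        simp only [map_smul, smul_eq_mul, hdual, mul_ite, mul_one, mul_zero]
        simp
      rw [map_sub, hs, sub_self]
    have hw : ∀ v : g, B (u - ∑ i : ι, B (e i) u • e' i) v = 0 := by
      intro v
      rw [hBsymm]
      conv_lhs => rw [← e.sum_repr v]
      rw [map_sum, LinearMap.sum_apply]
      refine Finset.sum_eq_zero fun j _ => ?_
      rw [map_smul, LinearMap.smul_apply, hbase j, smul_zero]
    exact (sub_eq_zero.mp (hBnd _ hw)).symm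
  -- Expansion of any vector in the `e` basis:  u = ∑ i, B u (e' i) • e i
  have expB : ∀ u : g, ∑ i : ι, B u (e' i) • e i = u := by
    intro u
    have hbase : ∀ j : ι, B (u - ∑ i : ι, B u (e' i) • e i) (e' j) = 0 := by
      intro j
      have hs : B (∑ i : ι, B u (e' i) • e i) (e' j) = B u (e' j) := by
        rw [map_sum, LinearMap.sum_apply]
        simp only [map_smul, LinearMap.smul_apply, smul_eq_mul, hdual, mul_ite, mul_one, mul_zero]
        simp
      rw [map_sub, LinearMap.sub_apply, hs, sub_self]
    have hw : ∀ v : g, B (u - ∑ i : ι, B u (e' i) • e i) v = 0 := by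
      intro v
      conv_lhs => rw [← expA v]
      rw [map_sum]
      refine Finset.sum_eq_zero fun j _ => ?_
      rw [map_smul, smul_eq_mul, hbase j, mul_zero]
    exact (sub_eq_zero.mp (hBnd _ hw)).symm
  -- Linearity of `u ↦ T (snoc x u)` and `u ↦ T' (cons u y)` on finite sums of smuls
  have Tlin : ∀ (c : ι → ℝ) (w : ι → g),
      T (Fin.snoc x (∑ j : ι, c j • w j)) = ∑ j : ι, c j * T (Fin.snoc x (w j)) := by
    intro c w
    have h0 : ∀ u : g, T (Fin.snoc x u) = T (Function.update (Fin.snoc x 0) (Fin.last n) u) := by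
      intro u; rw [Fin.update_snoc_last]
    rw [h0, T.map_update_sum]
    refine Finset.sum_congr rfl fun j _ => ?_
    rw [T.map_update_smul, ← h0, smul_eq_mul]
  have T'lin : ∀ (c : ι → ℝ) (w : ι → g),
      T' (Fin.cons (∑ j : ι, c j • w j) y) = ∑ j : ι, c j * T' (Fin.cons (w j) y) := by
    intro c w
    have h0 : ∀ u : g, T' (Fin.cons u y) = T' (Function.update (Fin.cons 0 y) 0 u) := by
      intro u; rw [Fin.update_cons_zero]
    rw [h0, T'.map_update_sum]
    refine Finset.sum_congr rfl fun j _ => ?_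
    rw [T'.map_update_smul, ← h0, smul_eq_mul]
  -- invariance of T: contract the sum over updated slots
  have key1 : ∀ i : ι, ∑ s : Fin n, T (Fin.snoc (Function.update x s ⁅z, x s⁆) (e i))
      = - T (Fin.snoc x ⁅z, e i⁆) := by
    intro i
    have h1 := hT z (Fin.snoc x (e i))
    rw [Fin.sum_univ_castSucc] at h1
    simp only [Fin.snoc_castSucc, Fin.snoc_last, Fin.update_snoc_last, ← Fin.snoc_update] at h1
    linarith
  have key2 : ∀ i : ι, ∑ t : Fin m, T' (Fin.cons (e' i) (Function.update y t ⁅z, y t⁆))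
      = - T' (Fin.cons ⁅z, e' i⁆ y) := by
    intro i
    have h1 := hT' z (Fin.cons (e' i) y)
    rw [Fin.sum_univ_succ] at h1
    simp only [Fin.cons_zero, Fin.cons_succ, Fin.update_cons_zero, ← Fin.cons_update] at h1
    linarith
  -- rewrite the goal using key1, key2
  have lhs1 : ∑ s : Fin n, ∑ i : ι,
      T (Fin.snoc (Function.update x s ⁅z, x s⁆) (e i)) * T' (Fin.cons (e' i) y)
      = ∑ i : ι, - T (Fin.snoc x ⁅z, e i⁆) * T' (Fin.cons (e' i) y) := by
    rw [Finset.sum_comm]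
    refine Finset.sum_congr rfl fun i _ => ?_
    rw [← Finset.sum_mul, key1 i]
  have lhs2 : ∑ t : Fin m, ∑ i : ι,
      T (Fin.snoc x (e i)) * T' (Fin.cons (e' i) (Function.update y t ⁅z, y t⁆))
      = ∑ i : ι, T (Fin.snoc x (e i)) * (- T' (Fin.cons ⁅z, e' i⁆ y)) := by
    rw [Finset.sum_comm]
    refine Finset.sum_congr rfl fun i _ => ?_
    rw [← Finset.mul_sum, key2 i]
  rw [lhs1, lhs2]
  -- expand the bracket terms in the bases
  have exp1 : ∀ i : ι, T (Fin.snoc x ⁅z, e i⁆)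
      = ∑ j : ι, B ⁅z, e i⁆ (e' j) * T (Fin.snoc x (e j)) := by
    intro i
    conv_lhs => rw [← expB ⁅z, e i⁆]
    exact Tlin _ _
  have exp2 : ∀ i : ι, T' (Fin.cons ⁅z, e' i⁆ y)
      = ∑ j : ι, B (e j) ⁅z, e' i⁆ * T' (Fin.cons (e' j) y) := by
    intro i
    conv_lhs => rw [← expA ⁅z, e' i⁆]
    exact T'lin _ _
  have P1 : ∑ i : ι, T (Fin.snoc x ⁅z, e i⁆) * T' (Fin.cons (e' i) y)
      = ∑ i : ι, ∑ j : ι, B ⁅z, e i⁆ (e' j) * T (Fin.snoc x (e j)) * T' (Fin.cons (e' i) y) := by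
    refine Finset.sum_congr rfl fun i _ => ?_
    rw [exp1 i, Finset.sum_mul]
  have P2 : ∑ i : ι, T (Fin.snoc x (e i)) * T' (Fin.cons ⁅z, e' i⁆ y)
      = ∑ i : ι, ∑ j : ι, B (e i) ⁅z, e' j⁆ * T (Fin.snoc x (e j)) * T' (Fin.cons (e' i) y) := by
    calc ∑ i : ι, T (Fin.snoc x (e i)) * T' (Fin.cons ⁅z, e' i⁆ y)
        = ∑ i : ι, ∑ j : ι, B (e j) ⁅z, e' i⁆ * T (Fin.snoc x (e i)) * T' (Fin.cons (e' j) y) := by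
          refine Finset.sum_congr rfl fun i _ => ?_
          rw [exp2 i, Finset.mul_sum]
          exact Finset.sum_congr rfl fun j _ => by ring
      _ = _ := by rw [Finset.sum_comm]
  have main : (∑ i : ι, ∑ j : ι, B ⁅z, e i⁆ (e' j) * T (Fin.snoc x (e j)) * T' (Fin.cons (e' i) y))
      + (∑ i : ι, ∑ j : ι, B (e i) ⁅z, e' j⁆ * T (Fin.snoc x (e j)) * T' (Fin.cons (e' i) y)) = 0 := by
    rw [← Finset.sum_add_distrib]
    refine Finset.sum_eq_zero fun i _ => ?_
    rw [← Finset.sum_add_distrib]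
    refine Finset.sum_eq_zero fun j _ => ?_
    have hinv : B ⁅z, e i⁆ (e' j) = - B (e i) ⁅z, e' j⁆ := by
      have := hBinv z (e i) (e' j); linarith
    rw [hinv]; ring
  have g1 : ∑ i : ι, - T (Fin.snoc x ⁅z, e i⁆) * T' (Fin.cons (e' i) y)
      = - ∑ i : ι, T (Fin.snoc x ⁅z, e i⁆) * T' (Fin.cons (e' i) y) := by
    simp [neg_mul]
  have g2 : ∑ i : ι, T (Fin.snoc x (e i)) * (- T' (Fin.cons ⁅z, e' i⁆ y))
      = - ∑ i : ι, T (Fin.snoc x (e i)) * T' (Fin.cons ⁅z, e' i⁆ y) := by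
    simp [mul_neg]
  rw [g1, g2, P1, P2]
  linarith [main]
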